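/- For tensors 𝔸 (order k+1, dimension n), 𝔹 (order k+1, dimension m), ℂ (order r+1, dimension n), 𝔻 (order r+1, dimension m) with k, r ≥ 1, the direct product and general product satisfy (𝔸 ⊗ 𝔹)(ℂ ⊗ 𝔻) = (𝔸ℂ) ⊗ (𝔹𝔻). -/

import Mathlib

open scoped BigOperators

noncomputable section

/-- An "order (1 + |α|)" tensor of dimension `|I|` over `R`: entries indexed by a
head index in `I` and a tail of indices `α → I`. -/
abbrev Tensor (R I α : Type) : Type := I → (α → I) → R

/-- The general tensor product: `(A*B)_{i α₁ ⋯ α_m} = ∑ a_{i i₂ ⋯} ∏ b_{i_j α_j}`. -/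
def tmul {R I α β : Type} [CommSemiring R] [Fintype I] [DecidableEq α] [Fintype α]
    (A : Tensor R I α) (B : Tensor R I β) : Tensor R I (α × β) :=
  fun i f => ∑ t : α → I, A i t * ∏ j : α, B (t j) (fun b => f (j, b))

/-- The general tensor product of a tensor with a vector (an order-1 tensor). -/
def tapp {R I α : Type} [CommSemiring R] [Fintype I] [DecidableEq α] [Fintype α]
    (A : Tensor R I α) (x : I → R) : I → R :=
  fun i => ∑ t : α → I, A i t * ∏ j : α, x (t j)

/-- The general tensor product `P * A` where `P` is a matrix (an order-2 tensor). -/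
def matMulT {R I α : Type} [CommSemiring R] [Fintype I]
    (P : Matrix I I R) (A : Tensor R I α) : Tensor R I α :=
  fun i f => ∑ j : I, P i j * A j f

/-- The general tensor product `A * Q` where `Q` is a matrix (an order-2 tensor). -/
def tMulMat {R I α : Type} [CommSemiring R] [Fintype I] [DecidableEq α] [Fintype α]
    (A : Tensor R I α) (Q : Matrix I I R) : Tensor R I α :=
  fun i f => ∑ t : α → I, A i t * ∏ j : α, Q (t j) (f j)

/-- The unit tensor `𝕀`: entries `1` exactly on the diagonal. -/
def unitT (R I α : Type) [CommSemiring R] [DecidableEq I] [Fintype α] [DecidableEq α] :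
    Tensor R I α :=
  fun i f => if ∀ j, f j = i then 1 else 0

/-- The direct product of two tensors of the same order. -/
def dprod {R I J α : Type} [CommSemiring R]
    (A : Tensor R I α) (B : Tensor R J α) : Tensor R (I × J) α :=
  fun p f => A p.1 (fun j => (f j).1) * B p.2 (fun j => (f j).2)

end

/-- `(𝔸 ⊗ 𝔹)(ℂ ⊗ 𝔻) = (𝔸ℂ) ⊗ (𝔹𝔻)`; `𝔸, 𝔹` have order `k + 1`,
`ℂ, 𝔻` have order `r + 1`, with `k, r ≥ 1`. -/
theorem dprod_tmul (n m k r : ℕ) (hk : 1 ≤ k) (hr : 1 ≤ r)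
    (A : Tensor ℂ (Fin n) (Fin k)) (B : Tensor ℂ (Fin m) (Fin k))
    (C : Tensor ℂ (Fin n) (Fin r)) (D : Tensor ℂ (Fin m) (Fin r)) :
    tmul (dprod A B) (dprod C D) = dprod (tmul A C) (tmul B D) := by
  funext p f
  simp only [tmul, dprod]
  rw [← (Equiv.arrowProdEquivProdArrow (Fin k) (fun _ => Fin n) (fun _ => Fin m)).symm.sum_comp]
  rw [Fintype.sum_prod_type, Finset.sum_mul_sum]
  refine Finset.sum_congr rfl fun s _ => Finset.sum_congr rfl fun u _ => ?_
  simp [Equiv.arrowProdEquivProdArrow, Finset.prod_mul_distrib]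
  ring
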